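/- arXiv:2205.04578 — 3 statements merged into one kernel-verified Lean document; each statement's English description precedes it below -/
import Mathlib

section
/- For real numbers α and β with |β| < 1, a nonnegative integer P1 and a real P2 > 0, the integral ∫₀^π (1 + α cos θ)^{P1} / (1 + β cos θ)^{P2} dθ equals (1-β)^{-P2} · Σ_{q=0}^{P1} C(P1,q) (2α)^q (1-α)^{P1-q} · (√π Γ(q+1/2)/Γ(q+1)) · ₂F₁(P2, q+1/2; q+1; -2β/(1-β)). -/
open Real MeasureTheory Set

/-- Gauss hypergeometric function via Euler's integral representation
    (valid for `c > b > 0` and `z < 1`). -/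
noncomputable def hyp2F1 (a b c z : ℝ) : ℝ :=
  (Real.Gamma c / (Real.Gamma b * Real.Gamma (c - b))) *
    ∫ t in (0:ℝ)..1, t ^ (b - 1) * (1 - t) ^ (c - b - 1) * (1 - t * z) ^ (-a)

lemma img_lemma : (fun θ : ℝ => (1 + Real.cos θ) / 2) '' Set.Ioo 0 π = Set.Ioo (0:ℝ) 1 := by
  ext t
  constructor
  · rintro ⟨θ, ⟨h0, hπ⟩, rfl⟩
    have hc1 : Real.cos θ < Real.cos 0 :=
      Real.strictAntiOn_cos (Set.left_mem_Icc.mpr Real.pi_pos.le) ⟨h0.le, hπ.le⟩ h0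
    have hc2 : Real.cos π < Real.cos θ :=
      Real.strictAntiOn_cos ⟨h0.le, hπ.le⟩ (Set.right_mem_Icc.mpr Real.pi_pos.le) hπ
    rw [Real.cos_zero] at hc1
    rw [Real.cos_pi] at hc2
    constructor
    · dsimp only; linarith
    · dsimp only; linarith
  · rintro ⟨h0, h1⟩
    refine ⟨Real.arccos (2 * t - 1), ⟨?_, ?_⟩, ?_⟩
    · exact Real.arccos_pos.mpr (by linarith)
    · refine lt_of_le_of_ne (Real.arccos_le_pi _) ?_
      rw [Ne, Real.arccos_eq_pi]
      push_neg
      linarith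
    · show (1 + Real.cos (Real.arccos (2 * t - 1))) / 2 = t
      rw [Real.cos_arccos (by linarith) (by linarith)]; ring

lemma subst_lemma (β P2 : ℝ) (hβ : |β| < 1) (q : ℕ) :
    (∫ t in (0:ℝ)..1, t ^ ((q:ℝ) + 1/2 - 1) * (1 - t) ^ ((q:ℝ) + 1 - ((q:ℝ) + 1/2) - 1) *
        (1 - t * (-2 * β / (1 - β))) ^ (-P2))
    = ∫ θ in (0:ℝ)..π,
        ((1 + Real.cos θ) / 2) ^ q * ((1 + β * Real.cos θ) / (1 - β)) ^ (-P2) := by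
  have hβ1 : 0 < 1 - β := by have := abs_lt.mp hβ; linarith
  rw [intervalIntegral.integral_of_le (by norm_num : (0:ℝ) ≤ 1),
      intervalIntegral.integral_of_le Real.pi_pos.le,
      MeasureTheory.integral_Ioc_eq_integral_Ioo,
      MeasureTheory.integral_Ioc_eq_integral_Ioo,
      ← img_lemma,
      MeasureTheory.integral_image_eq_integral_abs_deriv_smul measurableSet_Ioo
        (f' := fun θ => -Real.sin θ / 2)
        (fun x _ => (((Real.hasDerivAt_cos x).const_add 1).div_const 2).hasDerivWithinAt)
        (fun x hx y hy hxy => by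
          have hc : Real.cos x = Real.cos y := by linarith
          exact Real.injOn_cos ⟨hx.1.le, hx.2.le⟩ ⟨hy.1.le, hy.2.le⟩ hc)]
  refine MeasureTheory.setIntegral_congr_fun measurableSet_Ioo fun θ hθ => ?_
  obtain ⟨h0, hπ⟩ := hθ
  have hs : 0 < Real.sin θ := Real.sin_pos_of_pos_of_lt_pi h0 hπ
  have hsc := Real.sin_sq_add_cos_sq θ
  have hc2 : Real.cos θ ^ 2 < 1 := by nlinarith
  have hcu : Real.cos θ < 1 := by nlinarith
  have hcl : -1 < Real.cos θ := by nlinarith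
  set c := Real.cos θ with hcdef
  set s := Real.sin θ with hsdef
  have ht0 : (0:ℝ) < (1 + c) / 2 := by linarith
  have ht1 : (0:ℝ) < 1 - (1 + c) / 2 := by linarith
  have e1 : (q:ℝ) + 1/2 - 1 = (q:ℝ) + (-(1/2)) := by ring
  have e2 : (q:ℝ) + 1 - ((q:ℝ) + 1/2) - 1 = -(1/2) := by ring
  have hC : 1 - (1 + c) / 2 * (-2 * β / (1 - β)) = (1 + β * c) / (1 - β) := by
    field_simp; ring
  have hXY : ((1 + c) / 2) ^ (-(1/2) : ℝ) * (1 - (1 + c) / 2) ^ (-(1/2) : ℝ) = (s / 2)⁻¹ := by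
    rw [← Real.mul_rpow ht0.le ht1.le]
    have hprod : (1 + c) / 2 * (1 - (1 + c) / 2) = (s / 2) ^ 2 := by
      have : s ^ 2 = 1 - c ^ 2 := by linarith
      rw [div_pow, this]; ring
    rw [hprod, ← Real.rpow_natCast (s / 2) 2, ← Real.rpow_mul (by positivity),
      show ((2:ℕ):ℝ) * (-(1/2)) = -1 by norm_num, Real.rpow_neg_one]
  have hsplit : ((1 + c) / 2) ^ ((q:ℝ) + (-(1/2))) =
      ((1 + c) / 2) ^ q * ((1 + c) / 2) ^ (-(1/2) : ℝ) := by
    rw [Real.rpow_add ht0, Real.rpow_natCast]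
  have habs : |(-s / 2)| = s / 2 := by
    rw [abs_of_nonpos (by linarith)]; ring
  simp only [smul_eq_mul]
  rw [e1, e2, hC, hsplit, habs]
  have hs2 : s / 2 ≠ 0 := by positivity
  calc s / 2 * (((1 + c) / 2) ^ q * ((1 + c) / 2) ^ (-(1/2) : ℝ) *
        (1 - (1 + c) / 2) ^ (-(1/2) : ℝ) * ((1 + β * c) / (1 - β)) ^ (-P2))
      = (((1 + c) / 2) ^ (-(1/2) : ℝ) * (1 - (1 + c) / 2) ^ (-(1/2) : ℝ)) * (s / 2) *
        (((1 + c) / 2) ^ q * ((1 + β * c) / (1 - β)) ^ (-P2)) := by ring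
    _ = ((1 + c) / 2) ^ q * ((1 + β * c) / (1 - β)) ^ (-P2) := by
        rw [hXY]; field_simp

lemma key_lemma (β P2 : ℝ) (hβ : |β| < 1) (q : ℕ) :
    (∫ θ in (0:ℝ)..π, (1 + Real.cos θ) ^ q * (1 + β * Real.cos θ) ^ (-P2))
    = (1 - β) ^ (-P2) * 2 ^ q *
        (Real.sqrt π * Real.Gamma ((q:ℝ) + 1/2) / Real.Gamma ((q:ℝ) + 1)) *
        hyp2F1 P2 ((q:ℝ) + 1/2) ((q:ℝ) + 1) (-2 * β / (1 - β)) := by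
  have hβ1 : 0 < 1 - β := by have := abs_lt.mp hβ; linarith
  have hpos : ∀ θ : ℝ, 0 < 1 + β * Real.cos θ := by
    intro θ
    have h1 : |β * Real.cos θ| < 1 := by
      calc |β * Real.cos θ| = |β| * |Real.cos θ| := abs_mul _ _
        _ ≤ |β| * 1 := by
            exact mul_le_mul_of_nonneg_left (Real.abs_cos_le_one θ) (abs_nonneg β)
        _ < 1 := by simpa using hβ
    have := abs_lt.mp h1
    linarith
  unfold hyp2F1
  rw [subst_lemma β P2 hβ q]
  have hcongr : ∀ θ : ℝ,
      ((1 + Real.cos θ) / 2) ^ q * ((1 + β * Real.cos θ) / (1 - β)) ^ (-P2)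
      = (1 - β) ^ P2 / 2 ^ q * ((1 + Real.cos θ) ^ q * (1 + β * Real.cos θ) ^ (-P2)) := by
    intro θ
    have h := (Real.rpow_pos_of_pos hβ1 P2).ne'
    rw [Real.div_rpow (hpos θ).le hβ1.le, Real.rpow_neg hβ1.le, div_pow]
    field_simp
  rw [intervalIntegral.integral_congr (fun θ _ => hcongr θ),
      intervalIntegral.integral_const_mul]
  have hG : Real.Gamma ((q:ℝ) + 1 - ((q:ℝ) + 1/2)) = Real.sqrt π := by
    have : (q:ℝ) + 1 - ((q:ℝ) + 1/2) = 1/2 := by ring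
    rw [this]
    exact Real.Gamma_one_half_eq
  rw [hG]
  have hGb : Real.Gamma ((q:ℝ) + 1/2) ≠ 0 :=
    (Real.Gamma_pos_of_pos (by positivity)).ne'
  have hGc : Real.Gamma ((q:ℝ) + 1) ≠ 0 :=
    (Real.Gamma_pos_of_pos (by positivity)).ne'
  have hsπ : Real.sqrt π ≠ 0 := by positivity
  have hr : (0:ℝ) < (1 - β) ^ P2 := Real.rpow_pos_of_pos hβ1 P2
  rw [Real.rpow_neg hβ1.le]
  have h2q : ((2:ℝ)) ^ q ≠ 0 := by positivity
  field_simp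
  ring
  congr 1; ext θ; ring

/-- Integral I1 from the Appendix. -/
theorem stmt_0 (α β : ℝ) (hβ : |β| < 1) (P1 : ℕ) (P2 : ℝ) (hP2 : 0 < P2) :
    (∫ θ in (0:ℝ)..π, (1 + α * Real.cos θ) ^ P1 / (1 + β * Real.cos θ) ^ P2)
      = (1 - β) ^ (-P2) *
        ∑ q ∈ Finset.range (P1 + 1),
          (P1.choose q : ℝ) * (2 * α) ^ q * (1 - α) ^ (P1 - q) *
            (Real.sqrt π * Real.Gamma ((q : ℝ) + 1/2) / Real.Gamma ((q : ℝ) + 1)) *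
            hyp2F1 P2 ((q : ℝ) + 1/2) ((q : ℝ) + 1) (-2 * β / (1 - β)) := by
  have hβ1 : 0 < 1 - β := by have := abs_lt.mp hβ; linarith
  have hpos : ∀ θ : ℝ, 0 < 1 + β * Real.cos θ := by
    intro θ
    have h1 : |β * Real.cos θ| < 1 := by
      calc |β * Real.cos θ| = |β| * |Real.cos θ| := abs_mul _ _
        _ ≤ |β| * 1 := by
            exact mul_le_mul_of_nonneg_left (Real.abs_cos_le_one θ) (abs_nonneg β)
        _ < 1 := by simpa using hβ
    have := abs_lt.mp h1
    linarith
  have hintg : ∀ θ : ℝ, (1 + α * Real.cos θ) ^ P1 / (1 + β * Real.cos θ) ^ P2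
      = ∑ q ∈ Finset.range (P1 + 1),
          (P1.choose q : ℝ) * α ^ q * (1 - α) ^ (P1 - q) *
            ((1 + Real.cos θ) ^ q * (1 + β * Real.cos θ) ^ (-P2)) := by
    intro θ
    have hbin : (1 + α * Real.cos θ) ^ P1
        = ∑ q ∈ Finset.range (P1 + 1),
            (α * (1 + Real.cos θ)) ^ q * (1 - α) ^ (P1 - q) * (P1.choose q : ℝ) := by
      rw [← add_pow]
      ring_nf
    rw [div_eq_mul_inv, ← Real.rpow_neg (hpos θ).le, hbin, Finset.sum_mul]
    refine Finset.sum_congr rfl fun q _ => ?_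
    rw [mul_pow]
    ring
  rw [intervalIntegral.integral_congr (fun θ _ => hintg θ)]
  have hint : ∀ q ∈ Finset.range (P1 + 1), IntervalIntegrable
      (fun θ => (P1.choose q : ℝ) * α ^ q * (1 - α) ^ (P1 - q) *
        ((1 + Real.cos θ) ^ q * (1 + β * Real.cos θ) ^ (-P2))) volume 0 π := by
    intro q _
    apply Continuous.intervalIntegrable
    have h1 : Continuous fun θ : ℝ => (1 + β * Real.cos θ) ^ (-P2) := by
      apply Continuous.rpow_const (by continuity)
      exact fun x => Or.inl (hpos x).ne'
    continuity
  rw [intervalIntegral.integral_finset_sum hint, Finset.mul_sum]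
  refine Finset.sum_congr rfl fun q _ => ?_
  rw [intervalIntegral.integral_const_mul, key_lemma β P2 hβ q, mul_pow]
  ring
end

section
/- The Rician Shadowed power density f(x) = (m/(m+K))^m · ((1+K)/γ̄) · exp(-(1+K)x/γ̄) · ₁F₁(m; 1; K(1+K)x/(γ̄(m+K))) is a probability density on [0,∞): it is nonnegative and integrates to 1, for all real m > 0, K ≥ 0, γ̄ > 0. -/
open Real MeasureTheory Set

noncomputable def poch (a : ℝ) (n : ℕ) : ℝ := (ascPochhammer ℝ n).eval a

/-- Confluent hypergeometric function of the first kind (series). -/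
noncomputable def hyp1F1 (a c z : ℝ) : ℝ :=
  ∑' k : ℕ, poch a k / (poch c k * (k.factorial : ℝ)) * z ^ k

lemma poch_zero (a : ℝ) : poch a 0 = 1 := by simp [poch]

lemma poch_succ (a : ℝ) (n : ℕ) : poch a (n + 1) = poch a n * (a + n) := by
  simp [poch, ascPochhammer_succ_eval]

lemma poch_pos {a : ℝ} (ha : 0 < a) (n : ℕ) : 0 < poch a n := ascPochhammer_pos n a ha

lemma poch_one_eq (n : ℕ) : poch 1 n = (n.factorial : ℝ) := by
  simpa [poch] using ascPochhammer_eval_one ℝ n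

lemma Gamma_add_nat {m : ℝ} (hm : 0 < m) (k : ℕ) :
    Real.Gamma (m + k) = poch m k * Real.Gamma m := by
  induction k with
  | zero => simp [poch_zero]
  | succ k ih =>
      have h0 : (0:ℝ) < m + k := by positivity
      have h1 : m + ((k:ℕ)+1 : ℕ) = (m + k) + 1 := by push_cast; ring
      rw [h1, Real.Gamma_add_one h0.ne', ih, poch_succ]; ring

lemma core_swap {f : ℕ → ℝ → ℝ} {F : ℝ → ℝ} {c : ℕ → ℝ}
    (hmeas : ∀ k, Measurable (f k))
    (hnn : ∀ k, ∀ t ∈ Ioi (0:ℝ), 0 ≤ f k t)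
    (hsum : ∀ t ∈ Ioi (0:ℝ), HasSum (fun k => f k t) (F t))
    (hintk : ∀ k, IntegrableOn (f k) (Ioi 0))
    (hint : ∀ k, ∫ t in Ioi (0:ℝ), f k t = c k) :
    ∫⁻ t in Ioi (0:ℝ), ENNReal.ofReal (F t) = ∑' k, ENNReal.ofReal (c k) := by
  have h1 : ∀ k, ENNReal.ofReal (c k) = ∫⁻ t in Ioi (0:ℝ), ENNReal.ofReal (f k t) := by
    intro k
    rw [← hint k, MeasureTheory.ofReal_integral_eq_lintegral_ofReal (hintk k)
      ((ae_restrict_iff' measurableSet_Ioi).2 (ae_of_all _ (hnn k)))]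
  simp_rw [h1]
  rw [← lintegral_tsum (fun k => ((hmeas k).ennreal_ofReal).aemeasurable)]
  refine lintegral_congr_ae ?_
  filter_upwards [ae_restrict_mem measurableSet_Ioi] with t ht
  rw [← (hsum t ht).tsum_eq,
    ENNReal.ofReal_tsum_of_nonneg (fun k => hnn k t ht) (hsum t ht).summable]


section
variable {f : ℕ → ℝ → ℝ} {F : ℝ → ℝ} {c : ℕ → ℝ}

lemma hasSum_of_integral
    (hmeas : ∀ k, Measurable (f k))
    (hnn : ∀ k, ∀ t ∈ Ioi (0:ℝ), 0 ≤ f k t)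
    (hsum : ∀ t ∈ Ioi (0:ℝ), HasSum (fun k => f k t) (F t))
    (hintk : ∀ k, IntegrableOn (f k) (Ioi 0))
    (hint : ∀ k, ∫ t in Ioi (0:ℝ), f k t = c k)
    (hcore : ∫⁻ t in Ioi (0:ℝ), ENNReal.ofReal (F t) = ∑' k, ENNReal.ofReal (c k))
    (hF : IntegrableOn F (Ioi 0)) {S : ℝ}
    (hFint : ∫ t in Ioi (0:ℝ), F t = S) :
    HasSum c S := by
  have hFnn : ∀ t ∈ Ioi (0:ℝ), 0 ≤ F t :=
    fun t ht => (hsum t ht).nonneg (fun k => hnn k t ht)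
  have cnn : ∀ k, 0 ≤ c k := fun k =>
    (hint k) ▸ setIntegral_nonneg measurableSet_Ioi (hnn k)
  have key : ENNReal.ofReal S = ∑' k, ENNReal.ofReal (c k) := by
    rw [← hFint, MeasureTheory.ofReal_integral_eq_lintegral_ofReal hF
      ((ae_restrict_iff' measurableSet_Ioi).2 (ae_of_all _ hFnn)), hcore]
  have hne : ∑' k, ENNReal.ofReal (c k) ≠ ⊤ := by
    rw [← key]; exact ENNReal.ofReal_ne_top
  have hsummable : Summable c :=
    (ENNReal.summable_toReal hne).congr (fun k => ENNReal.toReal_ofReal (cnn k))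
  have hSnn : 0 ≤ S := hFint ▸ setIntegral_nonneg measurableSet_Ioi hFnn
  have htsum : ∑' k, c k = S := by
    have h2 : ENNReal.ofReal (∑' k, c k) = ENNReal.ofReal S := by
      rw [ENNReal.ofReal_tsum_of_nonneg cnn hsummable, key]
    exact (ENNReal.ofReal_eq_ofReal_iff (tsum_nonneg cnn) hSnn).1 h2
  exact htsum ▸ hsummable.hasSum

lemma integral_of_hasSum
    (hmeas : ∀ k, Measurable (f k))
    (hnn : ∀ k, ∀ t ∈ Ioi (0:ℝ), 0 ≤ f k t)
    (hsum : ∀ t ∈ Ioi (0:ℝ), HasSum (fun k => f k t) (F t))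
    (hcore : ∫⁻ t in Ioi (0:ℝ), ENNReal.ofReal (F t) = ∑' k, ENNReal.ofReal (c k))
    (cnn : ∀ k, 0 ≤ c k)
    (hc : Summable c) :
    ∫ t in Ioi (0:ℝ), F t = ∑' k, c k := by
  have hFnn : ∀ t ∈ Ioi (0:ℝ), 0 ≤ F t :=
    fun t ht => (hsum t ht).nonneg (fun k => hnn k t ht)
  have hFmeas : AEStronglyMeasurable F (volume.restrict (Ioi (0:ℝ))) := by
    apply aestronglyMeasurable_of_tendsto_ae (u := Filter.atTop)
      (f := fun n t => ∑ k ∈ Finset.range n, f k t)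
    · exact fun n => (Finset.measurable_sum _ (fun k _ => hmeas k)).aestronglyMeasurable
    · filter_upwards [ae_restrict_mem measurableSet_Ioi] with t ht
      exact (hsum t ht).tendsto_sum_nat
  rw [MeasureTheory.integral_eq_lintegral_of_nonneg_ae
    ((ae_restrict_iff' measurableSet_Ioi).2 (ae_of_all _ hFnn)) hFmeas, hcore,
    ← ENNReal.ofReal_tsum_of_nonneg cnn hc, ENNReal.toReal_ofReal (tsum_nonneg cnn)]
end

lemma binomial_hasSum {m r : ℝ} (hm : 0 < m) (hr0 : 0 ≤ r) (hr1 : r < 1) :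
    HasSum (fun k : ℕ => poch m k / k.factorial * r ^ k) (((1 - r) ^ m)⁻¹) := by
  set f : ℕ → ℝ → ℝ := fun k t => Real.exp (-t) * t ^ (m - 1) * ((r * t) ^ k / k.factorial)
    with hf
  set F : ℝ → ℝ := fun t => t ^ (m - 1) * Real.exp (-((1 - r) * t)) with hF
  have h1r : (0:ℝ) < 1 - r := by linarith
  have hmeas : ∀ k, Measurable (f k) := by
    intro k; fun_prop
  have hnn : ∀ k, ∀ t ∈ Ioi (0:ℝ), 0 ≤ f k t := by
    intro k t ht
    have ht0 : (0:ℝ) < t := ht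
    have : 0 ≤ r * t := by positivity
    positivity
  have hsum : ∀ t ∈ Ioi (0:ℝ), HasSum (fun k => f k t) (F t) := by
    intro t ht
    have h := NormedSpace.expSeries_div_hasSum_exp (r * t)
    have h2 := h.mul_left (Real.exp (-t) * t ^ (m - 1))
    have : Real.exp (-t) * t ^ (m - 1) * NormedSpace.exp (r * t) = F t := by
      rw [← Real.exp_eq_exp_ℝ, hF]
      rw [mul_comm (Real.exp (-t)), mul_assoc, ← Real.exp_add]
      ring_nf
    rwa [this] at h2
  have hfeq : ∀ k : ℕ, ∀ t ∈ Ioi (0:ℝ),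
      f k t = (r ^ k / k.factorial) * (Real.exp (-t) * t ^ (m + k - 1)) := by
    intro k t ht
    have ht0 : (0:ℝ) < t := ht
    rw [hf]
    simp only
    rw [mul_pow, show m + k - 1 = (m - 1) + (k:ℝ) by ring,
      Real.rpow_add ht0, Real.rpow_natCast]
    ring
  have hintk : ∀ k, IntegrableOn (f k) (Ioi 0) := by
    intro k
    have h0 : (0:ℝ) < m + k := by positivity
    have := (Real.GammaIntegral_convergent h0).const_mul (r ^ k / k.factorial)
    exact (IntegrableOn.congr_fun this
      (fun t ht => (hfeq k t ht).symm) measurableSet_Ioi)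
  have hint : ∀ k, ∫ t in Ioi (0:ℝ), f k t
      = r ^ k / k.factorial * Real.Gamma (m + k) := by
    intro k
    have h0 : (0:ℝ) < m + k := by positivity
    rw [setIntegral_congr_fun measurableSet_Ioi (hfeq k),
      MeasureTheory.integral_const_mul, ← Real.Gamma_eq_integral h0]
  have hF' : IntegrableOn F (Ioi 0) := by
    have := integrableOn_rpow_mul_exp_neg_mul_rpow (p := 1) (s := m - 1) (b := 1 - r)
      (by linarith) zero_lt_one h1r
    exact this.congr_fun (fun t ht => by
      simp only [Real.rpow_one, neg_mul]; rfl) measurableSet_Ioi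
  have hFint : ∫ t in Ioi (0:ℝ), F t = (1 / (1 - r)) ^ m * Real.Gamma m := by
    rw [hF]
    exact integral_rpow_mul_exp_neg_mul_Ioi hm h1r
  have key := hasSum_of_integral hmeas hnn hsum hintk hint
    (core_swap hmeas hnn hsum hintk hint) hF' hFint
  have hG : (0:ℝ) < Real.Gamma m := Real.Gamma_pos_of_pos hm
  have key2 := key.div_const (Real.Gamma m)
  have heq : ∀ k : ℕ, r ^ k / k.factorial * Real.Gamma (m + k) / Real.Gamma m
      = poch m k / k.factorial * r ^ k := by
    intro k
    rw [Gamma_add_nat hm k]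
    field_simp
  have hval : (1 / (1 - r)) ^ m * Real.Gamma m / Real.Gamma m = ((1 - r) ^ m)⁻¹ := by
    rw [mul_div_assoc, div_self hG.ne', mul_one, one_div, ← Real.inv_rpow h1r.le]
  have hfun : (fun k : ℕ => r ^ k / k.factorial * Real.Gamma (m + k) / Real.Gamma m)
      = fun k : ℕ => poch m k / k.factorial * r ^ k := funext heq
  rw [hfun, hval] at key2
  exact key2

lemma hyp_hasSum {m : ℝ} (hm : 0 < m) {z : ℝ} (hz : 0 ≤ z) :
    HasSum (fun k : ℕ => poch m k / (poch 1 k * (k.factorial : ℝ)) * z ^ k)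
      (hyp1F1 m 1 z) := by
  have hexp := NormedSpace.expSeries_div_hasSum_exp (2 * z)
  rw [← Real.exp_eq_exp_ℝ] at hexp
  have hs : Summable (fun k : ℕ => poch m k / (poch 1 k * (k.factorial : ℝ)) * z ^ k) := by
    have hbin := (binomial_hasSum hm (by norm_num : (0:ℝ) ≤ 1/2) (by norm_num)).summable
    have hb2 : Summable (fun k : ℕ =>
        poch m k / k.factorial * (1/2:ℝ) ^ k * Real.exp (2 * z)) := hbin.mul_right _
    refine Summable.of_nonneg_of_le (fun k => ?_) (fun k => ?_) hb2
    · have h1 := (poch_pos hm k).le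
      have h2 := poch_pos one_pos k
      have h3 : (0:ℝ) < k.factorial := by positivity
      positivity
    · have hfac : ((k.factorial : ℝ)) ≠ 0 := by positivity
      have hle : (2 * z) ^ k / k.factorial ≤ Real.exp (2 * z) :=
        le_hasSum hexp k (fun j _ => by positivity)
      have hp := (poch_pos hm k).le
      calc poch m k / (poch 1 k * (k.factorial : ℝ)) * z ^ k
          = (poch m k / k.factorial * (1/2:ℝ) ^ k) * ((2 * z) ^ k / k.factorial) := by
            rw [poch_one_eq, mul_pow]
            field_simp
            rw [mul_assoc, ← mul_pow]; norm_num
        _ ≤ (poch m k / k.factorial * (1/2:ℝ) ^ k) * Real.exp (2 * z) := by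
            apply mul_le_mul_of_nonneg_left hle
            positivity
  unfold hyp1F1
  exact hs.hasSum


/-- The Rician Shadowed power density is a probability density on `[0,∞)`. -/
theorem stmt_4 (m K γbar : ℝ) (hm : 0 < m) (hK : 0 ≤ K) (hγ : 0 < γbar) :
    (∀ x : ℝ, 0 ≤ x →
        0 ≤ (m / (m + K)) ^ m * ((1 + K) / γbar) * Real.exp (-(1 + K) * x / γbar) *
              hyp1F1 m 1 (K * (1 + K) * x / (γbar * (m + K)))) ∧
    (∫ x in Ioi (0:ℝ),
        (m / (m + K)) ^ m * ((1 + K) / γbar) * Real.exp (-(1 + K) * x / γbar) *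
          hyp1F1 m 1 (K * (1 + K) * x / (γbar * (m + K)))) = 1 := by
  have hmK : (0:ℝ) < m + K := by positivity
  have h1K : (0:ℝ) < 1 + K := by positivity
  set a : ℝ := (1 + K) / γbar with ha
  set r : ℝ := K / (m + K) with hr
  have ha0 : 0 < a := by positivity
  have hr0 : 0 ≤ r := by positivity
  have hr1 : r < 1 := by rw [hr, div_lt_one hmK]; linarith
  have hbridge : ∀ x : ℝ, K * (1 + K) * x / (γbar * (m + K)) = (a * r) * x := by
    intro x
    rw [ha, hr, div_mul_div_comm, div_mul_eq_mul_div]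
    ring_nf
  have habridge : ∀ x : ℝ, -(1 + K) * x / γbar = -(a * x) := by
    intro x; rw [ha]; ring
  clear_value a r
  have hhypnn : ∀ z : ℝ, 0 ≤ z → 0 ≤ hyp1F1 m 1 z := by
    intro z hz
    apply tsum_nonneg
    intro k
    have h1 := (poch_pos hm k).le
    have h2 := poch_pos one_pos k
    have h3 : (0:ℝ) < k.factorial := by positivity
    positivity
  constructor
  · intro x hx
    have hz : 0 ≤ K * (1 + K) * x / (γbar * (m + K)) := by positivity
    have hP : (0:ℝ) ≤ (m / (m + K)) ^ m * a * Real.exp (-(1 + K) * x / γbar) := by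
      have h4 : (0:ℝ) < m / (m + K) := by positivity
      positivity
    exact mul_nonneg hP (hhypnn _ hz)
  · set f : ℕ → ℝ → ℝ := fun k x => Real.exp (-(1 + K) * x / γbar) *
      (poch m k / (poch 1 k * (k.factorial : ℝ)) * (K * (1 + K) * x / (γbar * (m + K))) ^ k)
      with hf
    set F : ℝ → ℝ := fun x => Real.exp (-(1 + K) * x / γbar) *
      hyp1F1 m 1 (K * (1 + K) * x / (γbar * (m + K))) with hF
    set c : ℕ → ℝ := fun k => poch m k / k.factorial * r ^ k * (1 / a) with hc
    have hfeq : ∀ (k : ℕ) (x : ℝ), f k x =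
        (poch m k / (poch 1 k * (k.factorial : ℝ)) * (a * r) ^ k) *
          (x ^ k * Real.exp (-(a * x))) := by
      intro k x
      rw [hf]; simp only; rw [habridge x, hbridge x, mul_pow]; ring
    have hmeas : ∀ k, Measurable (f k) := by intro k; rw [hf]; fun_prop
    have hnn : ∀ k, ∀ x ∈ Ioi (0:ℝ), 0 ≤ f k x := by
      intro k x hx
      have hx0 : (0:ℝ) < x := hx
      have h1 := (poch_pos hm k).le
      have h2 := poch_pos one_pos k
      have h3 : (0:ℝ) < k.factorial := by positivity
      rw [hf]; simp only
      positivity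
    have hsum : ∀ x ∈ Ioi (0:ℝ), HasSum (fun k => f k x) (F x) := by
      intro x hx
      have hx0 : (0:ℝ) < x := hx
      have hz : 0 ≤ K * (1 + K) * x / (γbar * (m + K)) := by positivity
      exact (hyp_hasSum hm hz).mul_left _
    have hkernel : ∀ k : ℕ, (∫ x in Ioi (0:ℝ), x ^ k * Real.exp (-(a * x)))
        = (1/a) ^ (k+1) * (k.factorial : ℝ) := by
      intro k
      have h := integral_rpow_mul_exp_neg_mul_Ioi (a := (k:ℝ) + 1) (by positivity) ha0
      rw [Real.Gamma_nat_eq_factorial] at h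
      rw [show ((k:ℝ) + 1) - 1 = (k:ℝ) by ring] at h
      rw [show ((k:ℝ) + 1) = ((k+1 : ℕ) : ℝ) by push_cast; ring] at h
      rw [Real.rpow_natCast] at h
      simp_rw [Real.rpow_natCast] at h
      exact h
    have hintk : ∀ k, IntegrableOn (f k) (Ioi 0) := by
      intro k
      have h := (integrableOn_rpow_mul_exp_neg_mul_rpow (p := 1) (s := (k:ℝ)) (b := a)
        (lt_of_lt_of_le neg_one_lt_zero (Nat.cast_nonneg k)) zero_lt_one ha0).const_mul
        (poch m k / (poch 1 k * (k.factorial : ℝ)) * (a * r) ^ k)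
      have h' : IntegrableOn (fun x : ℝ => poch m k / (poch 1 k * (k.factorial : ℝ)) *
          (a * r) ^ k * (x ^ (k:ℝ) * Real.exp (-a * x ^ (1:ℝ)))) (Ioi 0) := h
      refine IntegrableOn.congr_fun h' (fun x hx => ?_) measurableSet_Ioi
      rw [hfeq, Real.rpow_one, Real.rpow_natCast, neg_mul]
    have hint : ∀ k, ∫ x in Ioi (0:ℝ), f k x = c k := by
      intro k
      rw [setIntegral_congr_fun measurableSet_Ioi (fun x _ => hfeq k x),
        MeasureTheory.integral_const_mul, hkernel k, hc, poch_one_eq]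
      simp only
      have hfac : ((k.factorial : ℝ)) ≠ 0 := by positivity
      field_simp
      have ha' : a ≠ 0 := ha0.ne'
      rw [mul_pow, one_div, inv_pow, pow_succ]; field_simp
    have cnn : ∀ k, 0 ≤ c k := by
      intro k
      have h1 := (poch_pos hm k).le
      rw [hc]; simp only
      positivity
    have hcsum : HasSum c (((1 - r) ^ m)⁻¹ * (1 / a)) :=
      (binomial_hasSum hm hr0 hr1).mul_right _
    have hFint : ∫ x in Ioi (0:ℝ), F x = ((1 - r) ^ m)⁻¹ * (1 / a) := by
      rw [integral_of_hasSum hmeas hnn hsum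
        (core_swap hmeas hnn hsum hintk hint) cnn hcsum.summable, hcsum.tsum_eq]
    calc (∫ x in Ioi (0:ℝ),
        (m / (m + K)) ^ m * a * Real.exp (-(1 + K) * x / γbar) *
          hyp1F1 m 1 (K * (1 + K) * x / (γbar * (m + K))))
        = ∫ x in Ioi (0:ℝ), ((m / (m + K)) ^ m * a) * F x := by
          rw [hF]; congr 1; funext x; ring
      _ = ((m / (m + K)) ^ m * a) * (((1 - r) ^ m)⁻¹ * (1 / a)) := by
          rw [MeasureTheory.integral_const_mul, hFint]
      _ = 1 := by
          have h1r : 1 - r = m / (m + K) := by rw [hr]; field_simp; ring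
          have hP : (0:ℝ) < (m / (m + K)) ^ m :=
            Real.rpow_pos_of_pos (by positivity) m
          rw [h1r]
          field_simp
end

section
/- Fix m > 0, K ≥ 0, Δ ∈ [0,1], γ̄ > 0, s ≤ 0, and a natural number n. Then (1/π)∫₀^π M^{(n)}_{γ|θ}(s) dθ, with conditional GMGF M^{(n)}_{γ|θ}(s) = n! m^m (1+K-γ̄s)^{m-n-1} γ̄^n Σ_{l=0}^n C(n,l) ((m)_l/l!) (1+K)^{l+1} K^l (1+Δcos θ)^l / [m(1+K) - (m+K+KΔcos θ)γ̄s]^{l+m}, equals n! m^m (1+K-γ̄s)^{m-n-1} γ̄^n Σ_{l=0}^n C(n,l) ((m)_l/l!) (1+K)^{l+1} K^l / [m(1+K)-(m+K-KΔ)γ̄s]^{m+l} · Σ_{q=0}^l C(l,q) (1-Δ)^{l-q} (2Δ)^q (Γ(q+1/2)/(√π Γ(q+1))) ₂F₁(m+l, q+1/2; q+1; 2KΔγ̄s/(m(1+K)-(m+K-KΔ)γ̄s)). -/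
open Real MeasureTheory Set

open intervalIntegral in

lemma betaInt {p r : ℝ} (hp : -1 < p) (hr : -1 < r) :
    IntervalIntegrable (fun t : ℝ => t ^ p * (1 - t) ^ r) volume 0 1 := by
  have h1 : IntervalIntegrable (fun t : ℝ => t ^ p * (1 - t) ^ r) volume 0 (1/2) := by
    refine (intervalIntegrable_rpow' hp).mul_continuousOn ?_
    refine ContinuousOn.rpow_const (by fun_prop) ?_
    intro x hx
    rw [uIcc_of_le (by norm_num)] at hx
    left; have := hx.2; nlinarith
  have h2 : IntervalIntegrable (fun t : ℝ => t ^ p * (1 - t) ^ r) volume (1/2) 1 := by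
    have hbase : IntervalIntegrable (fun t : ℝ => (1 - t) ^ r) volume (1/2) 1 := by
      have := (intervalIntegrable_rpow' (a := 0) (b := 1/2) hr).comp_sub_left 1
      norm_num at this
      exact this.symm
    refine hbase.continuousOn_mul ?_
    refine ContinuousOn.rpow_const (by fun_prop) ?_
    intro x hx
    rw [uIcc_of_le (by norm_num)] at hx
    left; have := hx.1; positivity
  exact h1.trans h2

lemma rpow_neg_half (x : ℝ) (hx : 0 ≤ x) : x ^ (-(1/2) : ℝ) = (Real.sqrt x)⁻¹ := by
  rw [Real.rpow_neg hx, Real.sqrt_eq_rpow]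

lemma sqrt_quad {t : ℝ} (ht0 : 0 ≤ t) (ht1 : t ≤ 1) :
    Real.sqrt (1 - (2*t-1)^2) = 2 * Real.sqrt t * Real.sqrt (1-t) := by
  have h : 1 - (2*t-1)^2 = (2 * Real.sqrt t * Real.sqrt (1-t))^2 := by
    rw [mul_pow, mul_pow, Real.sq_sqrt ht0, Real.sq_sqrt (by linarith)]; ring
  rw [h, Real.sqrt_sq (by positivity)]

lemma If'int : IntervalIntegrable (fun t : ℝ => -(1 / Real.sqrt (1 - (2*t-1)^2)) * 2)
    volume 0 1 := by
  have h := (betaInt (p := -(1/2)) (r := -(1/2)) (by norm_num) (by norm_num)).neg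
  rw [intervalIntegrable_iff] at h ⊢
  refine h.congr_fun ?_ measurableSet_uIoc
  intro t ht
  rw [uIoc_of_le (by norm_num : (0:ℝ) ≤ 1)] at ht
  have ht0 : 0 < t := ht.1
  have ht1 : t ≤ 1 := ht.2
  show -(t ^ (-(1/2):ℝ) * (1-t) ^ (-(1/2):ℝ)) = -(1 / Real.sqrt (1 - (2*t-1)^2)) * 2
  rw [sqrt_quad ht0.le ht1, rpow_neg_half t ht0.le, rpow_neg_half (1-t) (by linarith)]
  have hst : 0 < Real.sqrt t := Real.sqrt_pos.2 ht0
  rcases eq_or_lt_of_le (Real.sqrt_nonneg (1-t)) with hb | hb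
  · rw [← hb]; simp
  · field_simp

lemma subst_arccos (g : ℝ → ℝ) (hg : Continuous g) :
    (∫ θ in (0:ℝ)..π, g θ)
      = -∫ t in (0:ℝ)..1, (-(1 / Real.sqrt (1 - (2*t-1)^2)) * 2) * g (Real.arccos (2*t-1)) := by
  have hcont : Continuous fun t : ℝ => Real.arccos (2*t-1) :=
    Real.continuous_arccos.comp (by fun_prop)
  have key := intervalIntegral.integral_comp_smul_deriv''' (a := (0:ℝ)) (b := 1)
    (f := fun t => Real.arccos (2*t-1))
    (f' := fun t => -(1 / Real.sqrt (1 - (2*t-1)^2)) * 2) (g := g)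
    hcont.continuousOn ?_ hg.continuousOn ?_ ?_
  · have h0 : Real.arccos (2*(0:ℝ)-1) = π := by norm_num
    have h1 : Real.arccos (2*(1:ℝ)-1) = 0 := by norm_num [Real.arccos_one]
    simp only [smul_eq_mul, Function.comp] at key
    rw [key, h0, h1, intervalIntegral.integral_symm]
  · intro x hx
    rw [min_eq_left (by norm_num : (0:ℝ) ≤ 1), max_eq_right (by norm_num : (0:ℝ) ≤ 1)] at hx
    have h1 : 2*x-1 ≠ -1 := by have := hx.1; intro h; linarith
    have h2 : 2*x-1 ≠ 1 := by have := hx.2; intro h; linarith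
    have inner : HasDerivAt (fun t : ℝ => 2*t-1) 2 x := by
      simpa using ((hasDerivAt_id x).const_mul 2).sub_const 1
    have := (Real.hasDerivAt_arccos h1 h2).comp x inner
    exact this.hasDerivWithinAt
  · exact ContinuousOn.integrableOn_compact (isCompact_uIcc.image hcont) hg.continuousOn
  · rw [← intervalIntegrable_iff']
    have := If'int.mul_continuousOn (hg.comp hcont).continuousOn
    simpa [smul_eq_mul, Function.comp] using this

lemma keyq (a D c : ℝ) (q : ℕ) (hc : 0 ≤ c) (hDc : 0 < D - c) :
    (1/π) * ∫ θ in (0:ℝ)..π, (1 + Real.cos θ)^q * (D + c * Real.cos θ) ^ (-a)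
      = (D - c) ^ (-a) * 2^q * (Real.Gamma ((q:ℝ)+1/2) / (Real.sqrt π * Real.Gamma ((q:ℝ)+1))) *
        hyp2F1 a ((q:ℝ)+1/2) ((q:ℝ)+1) (-(2*c)/(D-c)) := by
  set z : ℝ := -(2*c)/(D-c) with hz
  have hzneg : z ≤ 0 := div_nonpos_of_nonpos_of_nonneg (by linarith) hDc.le
  have hzD : (D - c) * z = -(2*c) := by rw [hz, mul_div_cancel₀ _ hDc.ne']
  have hq2 : ((q:ℝ) - (1/2)) ≠ 0 := by
    rcases Nat.eq_zero_or_pos q with h | h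
    · subst h; norm_num
    · have : (1:ℝ) ≤ q := by exact_mod_cast h
      exact ne_of_gt (by linarith)
  have hgpos : ∀ θ : ℝ, 0 < D + c * Real.cos θ := fun θ => by
    nlinarith [Real.neg_one_le_cos θ, Real.cos_le_one θ]
  have hgcont : Continuous fun θ : ℝ => (1 + Real.cos θ)^q * (D + c * Real.cos θ) ^ (-a) := by
    apply Continuous.mul (by fun_prop)
    apply Continuous.rpow_const (by fun_prop)
    exact fun θ => Or.inl (hgpos θ).ne'
  have stepA : (∫ θ in (0:ℝ)..π, (1 + Real.cos θ)^q * (D + c * Real.cos θ) ^ (-a))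
      = 2^q * ∫ t in (0:ℝ)..1,
          t ^ ((q:ℝ)-(1/2)) * (1-t) ^ (-(1/2):ℝ) * (D - c + 2*c*t) ^ (-a) := by
    rw [subst_arccos _ hgcont, ← intervalIntegral.integral_const_mul,
      ← intervalIntegral.integral_neg]
    apply intervalIntegral.integral_congr
    intro t ht
    rw [uIcc_of_le (by norm_num : (0:ℝ) ≤ 1)] at ht
    obtain ⟨ht0, ht1⟩ := ht
    have hcos : Real.cos (Real.arccos (2*t-1)) = 2*t-1 :=
      Real.cos_arccos (by linarith) (by linarith)
    simp only [hcos]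
    rcases eq_or_lt_of_le ht0 with h0 | h0
    · subst h0
      norm_num [Real.zero_rpow hq2]
    rcases eq_or_lt_of_le ht1 with h1 | h1
    · subst h1
      norm_num [Real.zero_rpow (by norm_num : (-(1/2):ℝ) ≠ 0)]
    rw [sqrt_quad ht0 ht1,
      show (1:ℝ)+(2*t-1) = 2*t from by ring,
      show D + c*(2*t-1) = D - c + 2*c*t from by ring,
      show ((q:ℝ)-(1/2)) = (q:ℝ)+(-(1/2)) from by ring,
      Real.rpow_add h0, Real.rpow_natCast, rpow_neg_half t ht0,
      rpow_neg_half (1-t) (by linarith), mul_pow]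
    have hst : (0:ℝ) < Real.sqrt t := Real.sqrt_pos.2 h0
    have hst2 : (0:ℝ) < Real.sqrt (1-t) := Real.sqrt_pos.2 (by linarith)
    field_simp
  have hΓq : 0 < Real.Gamma ((q:ℝ)+1/2) := Real.Gamma_pos_of_pos (by positivity)
  have hΓq1 : 0 < Real.Gamma ((q:ℝ)+1) := Real.Gamma_pos_of_pos (by positivity)
  have hsπ : (0:ℝ) < Real.sqrt π := Real.sqrt_pos.2 pi_pos
  have hπ : Real.sqrt π * Real.sqrt π = π := Real.mul_self_sqrt pi_pos.le
  have hB : hyp2F1 a ((q:ℝ)+1/2) ((q:ℝ)+1) z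
      = (Real.Gamma ((q:ℝ)+1) / (Real.Gamma ((q:ℝ)+1/2) * Real.sqrt π)) *
        ∫ t in (0:ℝ)..1, t ^ ((q:ℝ)-(1/2)) * (1-t) ^ (-(1/2):ℝ) * (1 - t*z) ^ (-a) := by
    unfold hyp2F1
    rw [show ((q:ℝ)+1) - ((q:ℝ)+1/2) = 1/2 from by ring, Real.Gamma_one_half_eq,
      show ((q:ℝ)+1/2) - 1 = (q:ℝ)-(1/2) from by ring,
      show ((1:ℝ)/2) - 1 = -(1/2) from by norm_num]
  have hC : ((D - c) ^ (-a)) * (∫ t in (0:ℝ)..1,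
        t ^ ((q:ℝ)-(1/2)) * (1-t) ^ (-(1/2):ℝ) * (1 - t*z) ^ (-a))
      = ∫ t in (0:ℝ)..1,
        t ^ ((q:ℝ)-(1/2)) * (1-t) ^ (-(1/2):ℝ) * (D - c + 2*c*t) ^ (-a) := by
    rw [← intervalIntegral.integral_const_mul]
    apply intervalIntegral.integral_congr
    intro t ht
    rw [uIcc_of_le (by norm_num : (0:ℝ) ≤ 1)] at ht
    obtain ⟨ht0, ht1⟩ := ht
    have h1tz : (0:ℝ) ≤ 1 - t*z := by nlinarith
    have : (D - c) ^ (-a) * (1 - t*z) ^ (-a) = (D - c + 2*c*t) ^ (-a) := by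
      rw [← Real.mul_rpow hDc.le h1tz,
        show (D-c)*(1-t*z) = D - c + 2*c*t from by linear_combination (-t) * hzD]
    calc (D - c) ^ (-a) * (t ^ ((q:ℝ)-(1/2)) * (1-t) ^ (-(1/2):ℝ) * (1 - t*z) ^ (-a))
        = t ^ ((q:ℝ)-(1/2)) * (1-t) ^ (-(1/2):ℝ) * ((D - c) ^ (-a) * (1 - t*z) ^ (-a)) := by ring
      _ = _ := by rw [this]
  rw [stepA, ← hC, hB]
  have hprod : (Real.Gamma ((q:ℝ)+1/2) / (Real.sqrt π * Real.Gamma ((q:ℝ)+1))) *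
      (Real.Gamma ((q:ℝ)+1) / (Real.Gamma ((q:ℝ)+1/2) * Real.sqrt π)) = 1/π := by
    have hN : (Real.Gamma ((q:ℝ)+1/2) * Real.Gamma ((q:ℝ)+1)) ≠ 0 := by positivity
    rw [div_mul_div_comm,
      show Real.sqrt π * Real.Gamma ((q:ℝ)+1) * (Real.Gamma ((q:ℝ)+1/2) * Real.sqrt π)
          = (Real.Gamma ((q:ℝ)+1/2) * Real.Gamma ((q:ℝ)+1)) * π from by
        linear_combination (Real.Gamma ((q:ℝ)+1/2) * Real.Gamma ((q:ℝ)+1)) * hπ,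
      div_eq_div_iff (mul_pos (mul_pos hΓq hΓq1) pi_pos).ne' pi_pos.ne']
    ring
  set X := ∫ t in (0:ℝ)..1, t ^ ((q:ℝ)-(1/2)) * (1-t) ^ (-(1/2):ℝ) * (1 - t*z) ^ (-a) with hX
  set G1 := Real.Gamma ((q:ℝ)+1/2) / (Real.sqrt π * Real.Gamma ((q:ℝ)+1)) with hG1
  set G2 := Real.Gamma ((q:ℝ)+1) / (Real.Gamma ((q:ℝ)+1/2) * Real.sqrt π) with hG2
  have hre : (D - c) ^ (-a) * 2^q * G1 * (G2 * X) = (G1 * G2) * ((D-c)^(-a) * 2^q * X) := by ring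
  rw [hre, hprod]
  ring

/-- Closed-form generalized MGF of the FTR model: averaging the conditional
    Rician Shadowed GMGF over uniform `θ` yields the closed form (9). -/
theorem stmt_11 (m K Δ γbar s : ℝ) (n : ℕ)
    (hm : 0 < m) (hK : 0 ≤ K) (hΔ0 : 0 ≤ Δ) (hΔ1 : Δ ≤ 1) (hγ : 0 < γbar) (hs : s ≤ 0) :
    (1 / π) * (∫ θ in (0:ℝ)..π,
        (n.factorial : ℝ) * m ^ m * (1 + K - γbar * s) ^ (m - (n : ℝ) - 1) * γbar ^ n *
          ∑ l ∈ Finset.range (n + 1),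
            (n.choose l : ℝ) * (poch m l / (l.factorial : ℝ)) *
              (1 + K) ^ (l + 1) * K ^ l * (1 + Δ * Real.cos θ) ^ l /
                (m * (1 + K) - (m + K + K * Δ * Real.cos θ) * γbar * s) ^ ((l : ℝ) + m))
      = (n.factorial : ℝ) * m ^ m * (1 + K - γbar * s) ^ (m - (n : ℝ) - 1) * γbar ^ n *
          ∑ l ∈ Finset.range (n + 1),
            (n.choose l : ℝ) * (poch m l / (l.factorial : ℝ)) *
              ((1 + K) ^ (l + 1) * K ^ l /
                (m * (1 + K) - (m + K - K * Δ) * γbar * s) ^ (m + (l : ℝ))) *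
              ∑ q ∈ Finset.range (l + 1),
                (l.choose q : ℝ) * (1 - Δ) ^ (l - q) * (2 * Δ) ^ q *
                  (Real.Gamma ((q : ℝ) + 1/2) / (Real.sqrt π * Real.Gamma ((q : ℝ) + 1))) *
                  hyp2F1 (m + (l : ℝ)) ((q : ℝ) + 1/2) ((q : ℝ) + 1)
                    (2 * K * Δ * γbar * s /
                      (m * (1 + K) - (m + K - K * Δ) * γbar * s)) := by
  have hgs : γbar * s ≤ 0 := mul_nonpos_iff.2 (Or.inl ⟨hγ.le, hs⟩)
  set D : ℝ := m * (1 + K) - (m + K) * γbar * s with hD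
  set c : ℝ := -(K * Δ * (γbar * s)) with hcdef
  have hc : 0 ≤ c := by
    rw [hcdef]
    nlinarith [mul_nonneg hK hΔ0, mul_nonpos_iff.2 (Or.inl ⟨mul_nonneg hK hΔ0, hgs⟩)]
  have hDc : 0 < D - c := by
    rw [hD, hcdef]
    have h1 : 0 ≤ m + K - K * Δ := by nlinarith
    nlinarith [mul_pos hm (by linarith : (0:ℝ) < 1 + K),
      mul_nonpos_iff.2 (Or.inl ⟨h1, hgs⟩)]
  have hDpos : ∀ x : ℝ, 0 < D + c * Real.cos x := fun x => by
    nlinarith [mul_le_mul_of_nonneg_left (Real.neg_one_le_cos x) hc]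
  have hzeq : 2 * K * Δ * γbar * s / (m * (1 + K) - (m + K - K * Δ) * γbar * s)
      = -(2 * c) / (D - c) := by
    rw [hD, hcdef]; congr 1 <;> ring
  have hdceq : m * (1 + K) - (m + K - K * Δ) * γbar * s = D - c := by
    rw [hD, hcdef]; ring
  have hbase : ∀ θ : ℝ, m * (1 + K) - (m + K + K * Δ * Real.cos θ) * γbar * s
      = D + c * Real.cos θ := fun θ => by rw [hD, hcdef]; ring
  simp only [hzeq]
  simp only [hdceq]
  have hFcont : ∀ l : ℕ, Continuous fun θ : ℝ =>
      (1 + Δ * Real.cos θ)^l * (D + c * Real.cos θ) ^ (-(m + (l:ℝ))) := by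
    intro l
    apply Continuous.mul (by fun_prop)
    apply Continuous.rpow_const (by fun_prop)
    exact fun θ => Or.inl (hDpos θ).ne'
  have hGcont : ∀ l q : ℕ, Continuous fun θ : ℝ =>
      (1 + Real.cos θ)^q * (D + c * Real.cos θ) ^ (-(m + (l:ℝ))) := by
    intro l q
    apply Continuous.mul (by fun_prop)
    apply Continuous.rpow_const (by fun_prop)
    exact fun θ => Or.inl (hDpos θ).ne'
  have key : ∀ l : ℕ, (1/π) * (∫ θ in (0:ℝ)..π,
        (1 + Δ * Real.cos θ)^l * (D + c * Real.cos θ) ^ (-(m + (l:ℝ))))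
      = ((D - c) ^ (m + (l:ℝ)))⁻¹ *
        ∑ q ∈ Finset.range (l + 1),
          (l.choose q : ℝ) * (1 - Δ) ^ (l - q) * (2 * Δ) ^ q *
            (Real.Gamma ((q:ℝ) + 1/2) / (Real.sqrt π * Real.Gamma ((q:ℝ) + 1))) *
            hyp2F1 (m + (l:ℝ)) ((q:ℝ) + 1/2) ((q:ℝ) + 1) (-(2*c)/(D-c)) := by
    intro l
    have expand : (∫ θ in (0:ℝ)..π,
          (1 + Δ * Real.cos θ)^l * (D + c * Real.cos θ) ^ (-(m + (l:ℝ))))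
        = ∑ q ∈ Finset.range (l + 1), ((l.choose q : ℝ) * Δ^q * (1 - Δ)^(l - q)) *
            ∫ θ in (0:ℝ)..π, (1 + Real.cos θ)^q * (D + c * Real.cos θ) ^ (-(m + (l:ℝ))) := by
      rw [intervalIntegral.integral_congr (g := fun θ =>
          ∑ q ∈ Finset.range (l + 1), ((l.choose q : ℝ) * Δ^q * (1 - Δ)^(l - q)) *
            ((1 + Real.cos θ)^q * (D + c * Real.cos θ) ^ (-(m + (l:ℝ))))) ?_,
        intervalIntegral.integral_finset_sum ?_]
      · exact Finset.sum_congr rfl fun q _ => intervalIntegral.integral_const_mul _ _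
      · intro q _
        exact (continuous_const.mul (hGcont l q)).intervalIntegrable _ _
      · intro θ _
        dsimp only
        have hexp : (1 + Δ * Real.cos θ) = (Δ * (1 + Real.cos θ)) + (1 - Δ) := by ring
        rw [hexp, add_pow, Finset.sum_mul]
        exact Finset.sum_congr rfl fun q _ => by rw [mul_pow]; ring
    rw [expand, Finset.mul_sum, Finset.mul_sum]
    refine Finset.sum_congr rfl fun q _ => ?_
    have hkq := keyq (m + (l:ℝ)) D c q hc hDc
    rw [Real.rpow_neg hDc.le] at hkq
    simp only [mul_pow]
    linear_combination ((l.choose q : ℝ) * Δ^q * (1-Δ)^(l-q)) * hkq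
  rw [intervalIntegral.integral_const_mul]
  have hJ : (∫ θ in (0:ℝ)..π, ∑ l ∈ Finset.range (n + 1),
          (n.choose l : ℝ) * (poch m l / (l.factorial : ℝ)) *
            (1 + K) ^ (l + 1) * K ^ l * (1 + Δ * Real.cos θ) ^ l /
              (m * (1 + K) - (m + K + K * Δ * Real.cos θ) * γbar * s) ^ ((l : ℝ) + m))
      = ∑ l ∈ Finset.range (n + 1),
          ((n.choose l : ℝ) * (poch m l / (l.factorial : ℝ)) * (1 + K) ^ (l + 1) * K ^ l) *
            ∫ θ in (0:ℝ)..π,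
              (1 + Δ * Real.cos θ)^l * (D + c * Real.cos θ) ^ (-(m + (l:ℝ))) := by
    rw [intervalIntegral.integral_congr (g := fun θ => ∑ l ∈ Finset.range (n + 1),
        ((n.choose l : ℝ) * (poch m l / (l.factorial : ℝ)) * (1 + K) ^ (l + 1) * K ^ l) *
          ((1 + Δ * Real.cos θ)^l * (D + c * Real.cos θ) ^ (-(m + (l:ℝ))))) ?_,
      intervalIntegral.integral_finset_sum ?_]
    · exact Finset.sum_congr rfl fun l _ => intervalIntegral.integral_const_mul _ _
    · intro l _
      exact (continuous_const.mul (hFcont l)).intervalIntegrable _ _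
    · intro θ _
      dsimp only
      refine Finset.sum_congr rfl fun l _ => ?_
      rw [hbase θ, show ((l:ℝ) + m) = m + (l:ℝ) from add_comm _ _,
        Real.rpow_neg (hDpos θ).le]
      ring
  rw [hJ]
  have main : (1/π) * ∑ l ∈ Finset.range (n + 1),
        ((n.choose l : ℝ) * (poch m l / (l.factorial : ℝ)) * (1 + K) ^ (l + 1) * K ^ l) *
          (∫ θ in (0:ℝ)..π, (1 + Δ * Real.cos θ)^l * (D + c * Real.cos θ) ^ (-(m + (l:ℝ))))
      = ∑ l ∈ Finset.range (n + 1),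
          (n.choose l : ℝ) * (poch m l / (l.factorial : ℝ)) *
            ((1 + K) ^ (l + 1) * K ^ l / (D - c) ^ (m + (l : ℝ))) *
            ∑ q ∈ Finset.range (l + 1),
              (l.choose q : ℝ) * (1 - Δ) ^ (l - q) * (2 * Δ) ^ q *
                (Real.Gamma ((q:ℝ) + 1/2) / (Real.sqrt π * Real.Gamma ((q:ℝ) + 1))) *
                hyp2F1 (m + (l:ℝ)) ((q:ℝ) + 1/2) ((q:ℝ) + 1) (-(2*c)/(D-c)) := by
    rw [Finset.mul_sum]
    refine Finset.sum_congr rfl fun l _ => ?_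
    linear_combination ((n.choose l : ℝ) * (poch m l / (l.factorial : ℝ)) *
      (1 + K) ^ (l + 1) * K ^ l) * key l
  linear_combination ((n.factorial : ℝ) * m ^ m * (1 + K - γbar * s) ^ (m - (n : ℝ) - 1) *
    γbar ^ n) * main
end
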